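/- The subspace ℂP² ∖ ℝP² of the complex projective plane is homotopy equivalent to the conic C = {[x : y : z] ∈ ℂP² : x² + y² + z² = 0} (with its subspace topology). -/

import Mathlib

set_option maxHeartbeats 1000000

open Projectivization

/-- The complex projective plane, as the projectivization of `ℂ³`. -/
abbrev CP2 : Type := Projectivization ℂ (Fin 3 → ℂ)

noncomputable instance : TopologicalSpace CP2 :=
  inferInstanceAs (TopologicalSpace (Quotient _))

/-- Coordinatewise complex conjugation on `ℂ³`, as a semilinear map over `starRingEnd ℂ`. -/
def conjC3 : (Fin 3 → ℂ) →ₛₗ[starRingEnd ℂ] (Fin 3 → ℂ) where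
  toFun v i := starRingEnd ℂ (v i)
  map_add' u v := by funext i; simp
  map_smul' c v := by funext i; simp

lemma conjC3_injective : Function.Injective conjC3 := fun _ _ h =>
  funext fun i => star_injective (congrFun h i)

/-- The complex conjugation involution of `ℂP²`, induced by coordinatewise
complex conjugation on `ℂ³`. -/
noncomputable def conjCP2 : CP2 → CP2 := Projectivization.map conjC3 conjC3_injective

/-- The set of real points of `ℂP²`: points admitting a representative vector
all of whose coordinates are real. -/
def RP2 : Set CP2 :=
  {p | ∃ (v : Fin 3 → ℝ) (hv : (fun i => (v i : ℂ)) ≠ 0),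
    p = Projectivization.mk ℂ (fun i => (v i : ℂ)) hv}

/-- The conic `C = {[v] ∈ ℂP² : v₀² + v₁² + v₂² = 0}`. -/
def conic : Set CP2 := {p | p.rep 0 ^ 2 + p.rep 1 ^ 2 + p.rep 2 ^ 2 = 0}

namespace Complex

/-- compatibility: the complex absolute value, as an absolute value given by the norm -/
noncomputable def abs : AbsoluteValue ℂ ℝ where
  toFun z := ‖z‖
  map_mul' := norm_mul
  nonneg' := norm_nonneg
  eq_zero' _ := norm_eq_zero
  add_le' := norm_add_le

lemma abs_apply' (z : ℂ) : Complex.abs z = ‖z‖ := rfl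

lemma sq_abs (z : ℂ) : Complex.abs z ^ 2 = Complex.normSq z := by
  rw [abs_apply', Complex.sq_norm]

lemma abs_ofReal (r : ℝ) : Complex.abs (r : ℂ) = |r| := by
  rw [abs_apply', Complex.norm_real, Real.norm_eq_abs]

lemma norm_eq_abs (z : ℂ) : ‖z‖ = Complex.abs z := rfl

lemma continuous_abs : Continuous Complex.abs := continuous_norm

lemma abs_conj (z : ℂ) : Complex.abs ((starRingEnd ℂ) z) = Complex.abs z := by
  rw [abs_apply', abs_apply', Complex.norm_conj]

lemma normSq_eq_abs (z : ℂ) : Complex.normSq z = Complex.abs z ^ 2 := (sq_abs z).symm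

end Complex

namespace CP2Aux
noncomputable section
open Complex

abbrev V3 := Fin 3 → ℂ

def qf (v : V3) : ℂ := v 0 ^ 2 + v 1 ^ 2 + v 2 ^ 2
def bf (v : V3) : ℝ := Complex.normSq (v 0) + Complex.normSq (v 1) + Complex.normSq (v 2)
def sf (v : V3) : ℝ := bf v + Real.sqrt ((bf v)^2 - (Complex.abs (qf v))^2)
def Fm (τ : ℝ) (v : V3) : V3 :=
  fun i => v i - (τ : ℂ) * (qf v / (sf v : ℂ)) * (starRingEnd ℂ) (v i)

lemma bf_nonneg (v : V3) : 0 ≤ bf v := by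
  have := Complex.normSq_nonneg (v 0); have := Complex.normSq_nonneg (v 1)
  have := Complex.normSq_nonneg (v 2); unfold bf; linarith

lemma bf_pos {v : V3} (hv : v ≠ 0) : 0 < bf v := by
  rcases (bf_nonneg v).lt_or_eq with h | h
  · exact h
  · exfalso; apply hv
    have h0 := Complex.normSq_nonneg (v 0); have h1 := Complex.normSq_nonneg (v 1)
    have h2 := Complex.normSq_nonneg (v 2)
    unfold bf at h
    funext i
    have e0 : v 0 = 0 := by rw [← Complex.normSq_eq_zero]; linarith
    have e1 : v 1 = 0 := by rw [← Complex.normSq_eq_zero]; linarith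
    have e2 : v 2 = 0 := by rw [← Complex.normSq_eq_zero]; linarith
    fin_cases i <;> simpa using ‹_›

lemma abs_qf_le (v : V3) : Complex.abs (qf v) ≤ bf v := by
  have h1 : Complex.abs (qf v) ≤ Complex.abs (v 0 ^ 2) + Complex.abs (v 1 ^ 2) + Complex.abs (v 2 ^ 2) := by
    unfold qf
    calc Complex.abs (v 0 ^ 2 + v 1 ^ 2 + v 2 ^ 2)
        ≤ Complex.abs (v 0 ^ 2 + v 1 ^ 2) + Complex.abs (v 2 ^ 2) := Complex.abs.add_le _ _
      _ ≤ Complex.abs (v 0 ^ 2) + Complex.abs (v 1 ^ 2) + Complex.abs (v 2 ^ 2) := by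
          have := Complex.abs.add_le (v 0 ^ 2) (v 1 ^ 2); linarith
  simpa [map_pow, Complex.sq_abs, bf] using h1

lemma sf_pos {v : V3} (hv : v ≠ 0) : 0 < sf v := by
  have := Real.sqrt_nonneg ((bf v)^2 - (Complex.abs (qf v))^2)
  have := bf_pos hv; unfold sf; linarith

lemma sf_identity (v : V3) : sf v ^ 2 - 2 * bf v * sf v + Complex.abs (qf v) ^ 2 = 0 := by
  have h := abs_qf_le v
  have hm : 0 ≤ Complex.abs (qf v) := Complex.abs.nonneg _
  have hd : Real.sqrt ((bf v)^2 - (Complex.abs (qf v))^2) ^ 2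
      = (bf v)^2 - (Complex.abs (qf v))^2 :=
    Real.sq_sqrt (by nlinarith)
  unfold sf; nlinarith [hd]

lemma qf_smul (c : ℂ) (v : V3) : qf (c • v) = c ^ 2 * qf v := by
  simp only [qf, Pi.smul_apply, smul_eq_mul]; ring

lemma bf_smul (c : ℂ) (v : V3) : bf (c • v) = Complex.normSq c * bf v := by
  simp only [bf, Pi.smul_apply, smul_eq_mul, Complex.normSq_mul]; ring

lemma abs_qf_smul (c : ℂ) (v : V3) :
    Complex.abs (qf (c • v)) = Complex.normSq c * Complex.abs (qf v) := by
  rw [qf_smul, map_mul, map_pow, Complex.sq_abs]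

lemma sf_smul (c : ℂ) (v : V3) : sf (c • v) = Complex.normSq c * sf v := by
  unfold sf
  rw [bf_smul, abs_qf_smul]
  have : (Complex.normSq c * bf v) ^ 2 - (Complex.normSq c * Complex.abs (qf v)) ^ 2
      = Complex.normSq c ^ 2 * ((bf v) ^ 2 - (Complex.abs (qf v)) ^ 2) := by ring
  rw [this, Real.sqrt_mul (sq_nonneg _), Real.sqrt_sq (Complex.normSq_nonneg c)]
  ring

lemma Fm_smul (τ : ℝ) {c : ℂ} (hc : c ≠ 0) {v : V3} (hv : v ≠ 0) :
    Fm τ (c • v) = c • Fm τ v := by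
  funext i
  have hs : (sf v : ℂ) ≠ 0 := by
    exact_mod_cast (sf_pos hv).ne'
  have hN : ((Complex.normSq c : ℝ) : ℂ) = c * (starRingEnd ℂ) c := (Complex.mul_conj c).symm
  have hc' : (starRingEnd ℂ) c ≠ 0 := by simpa using hc
  simp only [Fm, Pi.smul_apply, smul_eq_mul, qf_smul, sf_smul, map_mul]
  push_cast
  rw [hN]
  field_simp

lemma conj_qf (v : V3) : (starRingEnd ℂ) (qf v)
    = (starRingEnd ℂ) (v 0) ^ 2 + (starRingEnd ℂ) (v 1) ^ 2 + (starRingEnd ℂ) (v 2) ^ 2 := by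
  simp [qf]

lemma sum_mul_conj (v : V3) : v 0 * (starRingEnd ℂ) (v 0) + v 1 * (starRingEnd ℂ) (v 1)
    + v 2 * (starRingEnd ℂ) (v 2) = ((bf v : ℝ) : ℂ) := by
  simp only [Complex.mul_conj, bf]; push_cast; ring

lemma qf_mul_conj (v : V3) : qf v * (starRingEnd ℂ) (qf v) = ((Complex.abs (qf v) : ℝ) : ℂ) ^ 2 := by
  rw [Complex.mul_conj, ← Complex.sq_abs]; push_cast; ring

lemma qf_Fm (τ : ℝ) {v : V3} (hv : v ≠ 0) :
    qf (Fm τ v) = qf v * (((sf v ^ 2 - 2 * τ * bf v * sf v + τ ^ 2 * Complex.abs (qf v) ^ 2)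
      / sf v ^ 2 : ℝ) : ℂ) := by
  have hs : (sf v : ℂ) ≠ 0 := by exact_mod_cast (sf_pos hv).ne'
  have expand : qf (Fm τ v) = qf v
      - 2 * (τ : ℂ) * (qf v / (sf v : ℂ)) * (v 0 * (starRingEnd ℂ) (v 0) + v 1 * (starRingEnd ℂ) (v 1) + v 2 * (starRingEnd ℂ) (v 2))
      + (τ : ℂ) ^ 2 * (qf v / (sf v : ℂ)) ^ 2 * ((starRingEnd ℂ) (v 0) ^ 2 + (starRingEnd ℂ) (v 1) ^ 2 + (starRingEnd ℂ) (v 2) ^ 2) := by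
    simp only [qf, Fm]; ring
  rw [expand, sum_mul_conj, ← conj_qf]
  push_cast
  field_simp
  push_cast
  linear_combination ((τ:ℂ)^2 * qf v) * qf_mul_conj v

lemma bf_Fm (τ : ℝ) {v : V3} (hv : v ≠ 0) :
    bf (Fm τ v) = (bf v * sf v ^ 2 - 2 * τ * Complex.abs (qf v) ^ 2 * sf v
      + τ ^ 2 * Complex.abs (qf v) ^ 2 * bf v) / sf v ^ 2 := by
  have hs : (sf v : ℂ) ≠ 0 := by exact_mod_cast (sf_pos hv).ne'
  apply Complex.ofReal_injective
  have lhs : ((bf (Fm τ v) : ℝ) : ℂ)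
      = Fm τ v 0 * (starRingEnd ℂ) (Fm τ v 0) + Fm τ v 1 * (starRingEnd ℂ) (Fm τ v 1)
        + Fm τ v 2 * (starRingEnd ℂ) (Fm τ v 2) := (sum_mul_conj (Fm τ v)).symm
  rw [lhs]
  have hconj : ∀ i : Fin 3, (starRingEnd ℂ) (Fm τ v i)
      = (starRingEnd ℂ) (v i) - (τ : ℂ) * ((starRingEnd ℂ) (qf v) / (sf v : ℂ)) * v i := by
    intro i
    simp only [Fm, map_sub, map_mul, map_div₀, Complex.conj_conj, Complex.conj_ofReal]
  have expand : Fm τ v 0 * (starRingEnd ℂ) (Fm τ v 0) + Fm τ v 1 * (starRingEnd ℂ) (Fm τ v 1)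
        + Fm τ v 2 * (starRingEnd ℂ) (Fm τ v 2)
      = (v 0 * (starRingEnd ℂ) (v 0) + v 1 * (starRingEnd ℂ) (v 1) + v 2 * (starRingEnd ℂ) (v 2))
        - (τ : ℂ) * ((starRingEnd ℂ) (qf v) / (sf v : ℂ)) * qf v
        - (τ : ℂ) * (qf v / (sf v : ℂ)) * (starRingEnd ℂ) (qf v)
        + (τ : ℂ) ^ 2 * (qf v / (sf v : ℂ)) * ((starRingEnd ℂ) (qf v) / (sf v : ℂ))
          * (v 0 * (starRingEnd ℂ) (v 0) + v 1 * (starRingEnd ℂ) (v 1) + v 2 * (starRingEnd ℂ) (v 2)) := by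
    simp only [hconj]; simp only [Fm]; simp only [conj_qf]; simp only [qf]; ring
  rw [expand, sum_mul_conj]
  have hq := qf_mul_conj v
  push_cast
  field_simp
  push_cast
  linear_combination (-2*((sf v:ℝ):ℂ)*(τ:ℂ) + ((bf v:ℝ):ℂ)*(τ:ℂ)^2) * hq

lemma G_nonneg {v : V3} (hv : v ≠ 0) {τ : ℝ} (h0 : 0 ≤ τ) (h1 : τ ≤ 1) :
    0 ≤ sf v ^ 2 - 2 * τ * bf v * sf v + τ ^ 2 * Complex.abs (qf v) ^ 2 := by
  set b := bf v with hb
  set m := Complex.abs (qf v) with hm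
  have hmb : m ≤ b := abs_qf_le v
  have hm0 : 0 ≤ m := Complex.abs.nonneg _
  set d := Real.sqrt (b ^ 2 - m ^ 2) with hdd
  have hd0 : 0 ≤ d := Real.sqrt_nonneg _
  have hd : d ^ 2 = b ^ 2 - m ^ 2 := Real.sq_sqrt (by nlinarith)
  have hs : sf v = b + d := rfl
  have hdb : d ≤ b := by nlinarith
  have hX : 0 ≤ (b + d) - τ * (b - d) := by
    nlinarith [mul_nonneg (sub_nonneg.2 h1) (sub_nonneg.2 hdb)]
  have hbd : 0 ≤ b + d := by nlinarith [bf_pos hv]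
  have key : 0 ≤ (b + d) * (1 - τ) * ((b + d) - τ * (b - d)) :=
    mul_nonneg (mul_nonneg hbd (by linarith)) hX
  rw [hs]; nlinarith [key, hd]

lemma abs_qf_Fm_lt {v : V3} (hlt : Complex.abs (qf v) < bf v) {τ : ℝ} (h0 : 0 ≤ τ) (h1 : τ ≤ 1) :
    Complex.abs (qf (Fm τ v)) < bf (Fm τ v) := by
  have hv : v ≠ 0 := by
    intro h; subst h
    simp [qf, bf] at hlt
  have hm0 : 0 ≤ Complex.abs (qf v) := Complex.abs.nonneg _
  have hsp : 0 < sf v := sf_pos hv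
  have hG := G_nonneg hv h0 h1
  have habs : Complex.abs (qf (Fm τ v))
      = Complex.abs (qf v) * ((sf v ^ 2 - 2 * τ * bf v * sf v + τ ^ 2 * Complex.abs (qf v) ^ 2) / sf v ^ 2) := by
    rw [qf_Fm τ hv, map_mul, Complex.abs_ofReal,
      _root_.abs_of_nonneg (div_nonneg hG (by positivity))]
  have hsum : 0 < sf v + τ * Complex.abs (qf v) := by nlinarith
  have key : 0 < (bf v - Complex.abs (qf v)) * (sf v + τ * Complex.abs (qf v)) ^ 2 :=
    mul_pos (by linarith) (pow_pos hsum 2)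
  rw [habs, bf_Fm τ hv, mul_div_assoc', div_lt_div_iff₀ (by positivity) (by positivity)]
  nlinarith [key, mul_pos hsp hsp, mul_pos key (mul_pos hsp hsp)]
lemma bf_Fm_pos {v : V3} (hlt : Complex.abs (qf v) < bf v) {τ : ℝ} (h0 : 0 ≤ τ) (h1 : τ ≤ 1) :
    0 < bf (Fm τ v) :=
  lt_of_le_of_lt (Complex.abs.nonneg _) (abs_qf_Fm_lt hlt h0 h1)

lemma Fm_ne_zero {v : V3} (hlt : Complex.abs (qf v) < bf v) {τ : ℝ} (h0 : 0 ≤ τ) (h1 : τ ≤ 1) :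
    Fm τ v ≠ 0 := by
  intro h
  have := bf_Fm_pos hlt h0 h1
  rw [h] at this
  simp [bf] at this

lemma qf_Fm_one {v : V3} (hv : v ≠ 0) : qf (Fm 1 v) = 0 := by
  rw [qf_Fm 1 hv]
  have h2 : sf v ^ 2 - 2 * 1 * bf v * sf v + 1 ^ 2 * Complex.abs (qf v) ^ 2 = 0 := by
    nlinarith [sf_identity v]
  rw [h2]
  simp

lemma Fm_zero (v : V3) : Fm 0 v = v := by
  funext i; simp [Fm]

lemma Fm_of_qf_eq_zero {v : V3} (h : qf v = 0) (τ : ℝ) : Fm τ v = v := by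
  funext i; simp [Fm, h]

-- membership in RP2 implies equality for every representative
lemma abs_qf_eq_of_mem {v : V3} (hv : v ≠ 0)
    (h : Projectivization.mk ℂ v hv ∈ RP2) : Complex.abs (qf v) = bf v := by
  obtain ⟨u, hu, hequ⟩ := h
  obtain ⟨a, ha⟩ := (Projectivization.mk_eq_mk_iff ℂ v _ hv hu).1 hequ
  have hva : v = (a : ℂ) • (fun i => ((u i : ℂ))) := ha.symm
  subst hva
  rw [qf_smul, bf_smul]
  have hq : qf (fun i => ((u i : ℂ))) = ((u 0 ^ 2 + u 1 ^ 2 + u 2 ^ 2 : ℝ) : ℂ) := by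
    simp only [qf]; push_cast; ring
  have hb : bf (fun i => ((u i : ℂ))) = u 0 ^ 2 + u 1 ^ 2 + u 2 ^ 2 := by
    simp only [bf, Complex.normSq_ofReal]; ring
  rw [map_mul, map_pow, Complex.sq_abs, hq, hb, Complex.abs_ofReal,
    _root_.abs_of_nonneg (by positivity)]

-- equality case of Cauchy-Schwarz gives a real point
lemma mem_RP2_of_abs_qf_eq {v : V3} (hv : v ≠ 0)
    (h : Complex.abs (qf v) = bf v) : Projectivization.mk ℂ v hv ∈ RP2 := by
  classical
  set x : EuclideanSpace ℂ (Fin 3) := WithLp.toLp 2 (fun i => (starRingEnd ℂ) (v i)) with hx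
  set y : EuclideanSpace ℂ (Fin 3) := WithLp.toLp 2 (fun i => v i) with hy
  have hx0 : x ≠ 0 := by
    intro h0; apply hv; funext i
    have h1 : (starRingEnd ℂ) (v i) = 0 := congrArg (fun z : EuclideanSpace ℂ (Fin 3) => z i) h0
    simpa using congrArg (starRingEnd ℂ) h1
  have hy0 : y ≠ 0 := by
    intro h0; apply hv; funext i
    exact congrArg (fun z : EuclideanSpace ℂ (Fin 3) => z i) h0
  have hinner : (inner ℂ x y : ℂ) = qf v := by
    rw [PiLp.inner_apply, Fin.sum_univ_three]
    simp only [hx, hy, RCLike.inner_apply]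
    simp [qf, sq]
  have hnx : ‖x‖ ^ 2 = bf v := by
    rw [EuclideanSpace.norm_eq, Real.sq_sqrt (by positivity), Fin.sum_univ_three]
    simp only [hx]
    simp [bf, Complex.norm_eq_abs, Complex.sq_abs]
  have hny : ‖y‖ ^ 2 = bf v := by
    rw [EuclideanSpace.norm_eq, Real.sq_sqrt (by positivity), Fin.sum_univ_three]
    simp only [hy]
    simp [bf, Complex.norm_eq_abs, Complex.sq_abs]
  have hxe : ‖x‖ = ‖y‖ := by
    nlinarith [norm_nonneg x, norm_nonneg y]
  have hcs : ‖(inner ℂ x y : ℂ)‖ = ‖x‖ * ‖y‖ := by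
    rw [hinner, Complex.norm_eq_abs, h, hxe, ← hny]; ring
  obtain ⟨r, hr0, hyx⟩ := (norm_inner_eq_norm_iff hx0 hy0).1 hcs
  have hvi : ∀ i, v i = r * (starRingEnd ℂ) (v i) := by
    intro i
    have := congrArg (fun z : EuclideanSpace ℂ (Fin 3) => z i) hyx
    simpa [hx, hy] using this
  obtain ⟨i0, hi0⟩ := Function.ne_iff.1 hv
  have hi0' : v i0 ≠ 0 := by simpa using hi0
  have ha : Complex.abs (v i0) ≠ 0 := by simpa using hi0'
  have habsr : Complex.abs r = 1 := by
    apply mul_right_cancel₀ ha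
    rw [one_mul]
    conv_rhs => rw [hvi i0]
    simp [map_mul, Complex.abs_conj]
  obtain ⟨w, hw⟩ := IsAlgClosed.exists_pow_nat_eq r (n := 2) (by norm_num)
  have habsw : Complex.abs w = 1 := by
    have h2 : Complex.abs w ^ 2 = 1 := by rw [← map_pow, hw, habsr]
    nlinarith [Complex.abs.nonneg w, sq_nonneg (Complex.abs w - 1), sq_nonneg (Complex.abs w + 1)]
  have hwne : w ≠ 0 := by
    intro h0; rw [h0] at habsw; simp at habsw
  have hmulc : w * (starRingEnd ℂ) w = 1 := by
    rw [Complex.mul_conj, Complex.normSq_eq_abs, habsw]; norm_num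
  have hconjv : ∀ i, (starRingEnd ℂ) (v i) = (starRingEnd ℂ) r * v i := by
    intro i
    have := congrArg (starRingEnd ℂ) (hvi i)
    simpa using this
  have hreal : ∀ i, (starRingEnd ℂ) ((starRingEnd ℂ) w * v i) = (starRingEnd ℂ) w * v i := by
    intro i
    rw [map_mul, Complex.conj_conj, hconjv i, ← hw, map_pow]
    calc w * ((starRingEnd ℂ) w ^ 2 * v i)
        = (w * (starRingEnd ℂ) w) * ((starRingEnd ℂ) w * v i) := by ring
      _ = (starRingEnd ℂ) w * v i := by rw [hmulc, one_mul]
  set u : Fin 3 → ℝ := fun i => ((starRingEnd ℂ) w * v i).re with hu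
  have hre : ∀ i, ((u i : ℝ) : ℂ) = (starRingEnd ℂ) w * v i := by
    intro i
    exact Complex.conj_eq_iff_re.1 (hreal i)
  have hcw : (starRingEnd ℂ) w ≠ 0 := by simpa using hwne
  have hu0 : (fun i => ((u i : ℝ) : ℂ)) ≠ 0 := by
    intro h0; apply hv; funext i
    have h1 := congrFun h0 i
    simp only [hre i] at h1
    have : v i = 0 := by
      rcases mul_eq_zero.1 h1 with h2 | h2
      · exact absurd h2 hcw
      · exact h2
    simpa using this
  refine ⟨u, hu0, ?_⟩
  rw [Projectivization.mk_eq_mk_iff']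
  refine ⟨w, funext fun i => ?_⟩
  simp only [Pi.smul_apply, smul_eq_mul, hre i]
  calc w * ((starRingEnd ℂ) w * v i) = (w * (starRingEnd ℂ) w) * v i := by ring
    _ = v i := by rw [hmulc, one_mul]

lemma not_RP2_iff {v : V3} (hv : v ≠ 0) :
    Projectivization.mk ℂ v hv ∉ RP2 ↔ Complex.abs (qf v) < bf v := by
  constructor
  · intro hn
    rcases lt_or_eq_of_le (abs_qf_le v) with h | h
    · exact h
    · exact absurd (mem_RP2_of_abs_qf_eq hv h) hn
  · intro hlt hm
    exact absurd (abs_qf_eq_of_mem hv hm) (ne_of_lt hlt)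

lemma mem_conic_iff {v : V3} (hv : v ≠ 0) :
    Projectivization.mk ℂ v hv ∈ conic ↔ qf v = 0 := by
  have hrep := Projectivization.mk_rep (Projectivization.mk ℂ v hv)
  obtain ⟨a, ha⟩ := (Projectivization.mk_eq_mk_iff ℂ _ _
    (Projectivization.rep_nonzero _) hv).1 hrep
  have hmem : (Projectivization.mk ℂ v hv ∈ conic) ↔ qf ((Projectivization.mk ℂ v hv).rep) = 0 := by
    unfold conic qf; rfl
  rw [hmem, ← ha, Units.smul_def, qf_smul]
  constructor
  · intro h0
    rcases mul_eq_zero.1 h0 with h | h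
    · exact absurd (pow_eq_zero_iff (n := 2) (by norm_num) |>.1 h) (Units.ne_zero a)
    · exact h
  · intro h0; rw [h0, mul_zero]

lemma conic_subset_compl : conic ⊆ RP2ᶜ := by
  intro p hp hmem
  obtain ⟨u, hu, hequ⟩ := hmem
  have hq0 : qf (fun i => ((u i : ℂ))) = 0 := by
    rw [← mem_conic_iff hu, ← hequ]
    exact hp
  have hq : qf (fun i => ((u i : ℂ))) = ((u 0 ^ 2 + u 1 ^ 2 + u 2 ^ 2 : ℝ) : ℂ) := by
    simp only [qf]; push_cast; ring
  rw [hq] at hq0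
  have hsum : u 0 ^ 2 + u 1 ^ 2 + u 2 ^ 2 = 0 := by exact_mod_cast hq0
  have h0 : u 0 = 0 := by nlinarith [sq_nonneg (u 0), sq_nonneg (u 1), sq_nonneg (u 2)]
  have h1 : u 1 = 0 := by nlinarith [sq_nonneg (u 0), sq_nonneg (u 1), sq_nonneg (u 2)]
  have h2 : u 2 = 0 := by nlinarith [sq_nonneg (u 0), sq_nonneg (u 1), sq_nonneg (u 2)]
  apply hu
  funext i
  fin_cases i <;> simp [h0, h1, h2]

abbrev PV := { v : V3 // v ≠ 0 }

local instance PVSetoid : Setoid PV := projectivizationSetoid ℂ V3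

def pr (v : PV) : CP2 := Projectivization.mk ℂ v.1 v.2

lemma pr_eq : pr = fun v : PV => Quotient.mk' v := rfl

lemma continuous_pr : Continuous pr := continuous_quotient_mk'

lemma surjective_pr : Function.Surjective pr := fun p =>
  ⟨⟨p.rep, p.rep_nonzero⟩, p.mk_rep⟩

/-- scalar multiplication by a unit, as a map on nonzero vectors -/
def smulPV (c : ℂˣ) (w : PV) : PV :=
  ⟨(c : ℂ) • w.1, by
    intro h
    exact w.2 (by simpa using congrArg (fun z => (c : ℂ)⁻¹ • z) h)⟩

lemma continuous_smulPV (c : ℂˣ) : Continuous (smulPV c) := by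
  apply Continuous.subtype_mk
  exact (continuous_const_smul _).comp continuous_subtype_val

lemma isOpenMap_pr : IsOpenMap pr := by
  intro U hU
  rw [pr_eq]
  apply (isQuotientMap_quotient_mk' (X := PV) (s := PVSetoid)).isOpen_preimage.mp
  have hset : Quotient.mk' ⁻¹' ((fun v : PV => (Quotient.mk' v : CP2)) '' U)
      = ⋃ c : ℂˣ, smulPV c ⁻¹' U := by
    ext w
    simp only [Set.mem_preimage, Set.mem_image, Set.mem_iUnion]
    constructor
    · rintro ⟨u, hu, hequ⟩
      have : pr u = pr w := hequ
      obtain ⟨c, hc⟩ := (Projectivization.mk_eq_mk_iff ℂ _ _ u.2 w.2).1 this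
      refine ⟨c, ?_⟩
      have : smulPV c w = u := Subtype.ext hc
      rwa [this]
    · rintro ⟨c, hc⟩
      refine ⟨smulPV c w, hc, ?_⟩
      have : pr (smulPV c w) = pr w := by
        rw [pr]
        rw [show pr w = Projectivization.mk ℂ w.1 w.2 from rfl]
        rw [Projectivization.mk_eq_mk_iff]
        exact ⟨c, rfl⟩
      exact this
  refine (congrArg IsOpen hset).mpr ?_
  exact isOpen_iUnion fun c => hU.preimage (continuous_smulPV c)

lemma isOpenQuotientMap_pr : IsOpenQuotientMap pr :=
  ⟨surjective_pr, continuous_pr, isOpenMap_pr⟩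

/-- restriction of an open map to a preimage is open -/
lemma isOpenMap_restrictPreimage {X Y : Type*} [TopologicalSpace X] [TopologicalSpace Y]
    {f : X → Y} (hf : IsOpenMap f) (s : Set Y) : IsOpenMap (s.restrictPreimage f) := by
  intro U hU
  obtain ⟨W, hW, hWU⟩ := isOpen_induced_iff.1 hU
  have himg : s.restrictPreimage f '' U = Subtype.val ⁻¹' (f '' W) := by
    ext y
    simp only [Set.mem_image, Set.mem_preimage]
    constructor
    · rintro ⟨x, hxU, rfl⟩
      exact ⟨x.1, by rw [← hWU] at hxU; exact hxU, rfl⟩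
    · rintro ⟨x, hxW, hfx⟩
      have hxs : x ∈ f ⁻¹' s := by
        simp only [Set.mem_preimage, hfx]
        exact y.2
      refine ⟨⟨x, hxs⟩, by rw [← hWU]; exact hxW, ?_⟩
      exact Subtype.ext hfx
  rw [himg]
  exact (hf W hW).preimage continuous_subtype_val

lemma isQuotientMap_restrict {X Y : Type*} [TopologicalSpace X] [TopologicalSpace Y]
    {f : X → Y} (hf : IsOpenQuotientMap f) (s : Set Y) :
    Topology.IsQuotientMap (s.restrictPreimage f) :=
  (isOpenMap_restrictPreimage hf.isOpenMap s).isQuotientMap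
    hf.continuous.restrictPreimage (hf.surjective.restrictPreimage s)


lemma nonreal_rep {p : CP2} (hp : p ∉ RP2) : Complex.abs (qf p.rep) < bf p.rep := by
  have h := not_RP2_iff p.rep_nonzero
  rw [p.mk_rep] at h
  exact h.1 hp

/-- The point-level deformation: `p ↦ [Fm τ (rep p)]`. -/
def Hp (τ : ℝ) (h0 : 0 ≤ τ) (h1 : τ ≤ 1) (p : CP2) (hp : p ∉ RP2) : CP2 :=
  Projectivization.mk ℂ (Fm τ p.rep) (Fm_ne_zero (nonreal_rep hp) h0 h1)

lemma Hp_not_RP2 (τ : ℝ) (h0 : 0 ≤ τ) (h1 : τ ≤ 1) (p : CP2) (hp : p ∉ RP2) :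
    Hp τ h0 h1 p hp ∉ RP2 :=
  (not_RP2_iff _).2 (abs_qf_Fm_lt (nonreal_rep hp) h0 h1)

lemma Hp_one_mem_conic (p : CP2) (hp : p ∉ RP2) :
    Hp 1 zero_le_one le_rfl p hp ∈ conic :=
  (mem_conic_iff _).2 (qf_Fm_one p.rep_nonzero)

lemma Hp_zero (p : CP2) (hp : p ∉ RP2) : Hp 0 le_rfl zero_le_one p hp = p := by
  unfold Hp
  have h : Fm 0 p.rep = p.rep := Fm_zero _
  conv_rhs => rw [← p.mk_rep]
  rw [Projectivization.mk_eq_mk_iff']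
  exact ⟨1, by rw [one_smul, h]⟩

lemma conic_rep_qf {p : CP2} (hp : p ∈ conic) : qf p.rep = 0 := hp

lemma Hp_of_conic (τ : ℝ) (h0 : 0 ≤ τ) (h1 : τ ≤ 1) (p : CP2) (hp : p ∉ RP2)
    (hc : p ∈ conic) : Hp τ h0 h1 p hp = p := by
  unfold Hp
  conv_rhs => rw [← p.mk_rep]
  rw [Projectivization.mk_eq_mk_iff']
  exact ⟨1, by rw [one_smul, Fm_of_qf_eq_zero (conic_rep_qf hc)]⟩

/-- compatibility: `Hp` computed from any representative. -/
lemma Hp_mk (τ : ℝ) (h0 : 0 ≤ τ) (h1 : τ ≤ 1) {v : V3} (hv : v ≠ 0) (p : CP2)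
    (hp : p ∉ RP2) (hpv : Projectivization.mk ℂ v hv = p) (hne : Fm τ v ≠ 0) :
    Hp τ h0 h1 p hp = Projectivization.mk ℂ (Fm τ v) hne := by
  unfold Hp
  have hrep : Projectivization.mk ℂ p.rep p.rep_nonzero = Projectivization.mk ℂ v hv := by
    rw [p.mk_rep, hpv]
  obtain ⟨a, ha⟩ := (Projectivization.mk_eq_mk_iff ℂ _ _ p.rep_nonzero hv).1 hrep
  rw [Projectivization.mk_eq_mk_iff']
  refine ⟨(a : ℂ), ?_⟩
  rw [← Fm_smul τ (Units.ne_zero a) hv]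
  rw [show ((a : ℂ) • v) = a • v from rfl, ha]

lemma Hp_congr {τ τ' : ℝ} (h : τ = τ') (h0 : 0 ≤ τ) (h1 : τ ≤ 1) (h0' : 0 ≤ τ') (h1' : τ' ≤ 1)
    (p : CP2) (hp : p ∉ RP2) : Hp τ h0 h1 p hp = Hp τ' h0' h1' p hp := by
  subst h; rfl

lemma Isub0 (t : unitInterval) : 0 ≤ 1 - (t : ℝ) := by linarith [t.2.2]

lemma Isub1 (t : unitInterval) : 1 - (t : ℝ) ≤ 1 := by linarith [t.2.1]

-- continuity of the basic functions
lemma continuous_qf : Continuous qf := by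
  unfold qf
  fun_prop

lemma continuous_bf : Continuous bf := by
  unfold bf
  have h := Complex.continuous_normSq
  fun_prop

lemma continuous_sf : Continuous sf := by
  unfold sf
  have h1 : Continuous fun v : V3 => Complex.abs (qf v) :=
    Complex.continuous_abs.comp continuous_qf
  have := continuous_bf
  have := Real.continuous_sqrt
  fun_prop

lemma continuous_Fm_aux :
    Continuous (fun q : ℝ × PV => Fm q.1 q.2.1) := by
  apply continuous_pi
  intro i
  unfold Fm
  have hval : Continuous (fun q : ℝ × PV => q.2.1) :=
    continuous_subtype_val.comp continuous_snd
  have happ : Continuous (fun q : ℝ × PV => q.2.1 i) := (continuous_apply i).comp hval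
  have hq : Continuous (fun q : ℝ × PV => qf q.2.1) := continuous_qf.comp hval
  have hs : Continuous (fun q : ℝ × PV => ((sf q.2.1 : ℝ) : ℂ)) :=
    Complex.continuous_ofReal.comp ((continuous_sf.comp hval))
  have hsne : ∀ q : ℝ × PV, ((sf q.2.1 : ℝ) : ℂ) ≠ 0 := fun q => by
    exact_mod_cast (sf_pos q.2.2).ne'
  have hdiv : Continuous (fun q : ℝ × PV => qf q.2.1 / ((sf q.2.1 : ℝ) : ℂ)) :=
    Continuous.div hq hs hsne
  have hτ : Continuous (fun q : ℝ × PV => ((q.1 : ℝ) : ℂ)) :=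
    Complex.continuous_ofReal.comp continuous_fst
  have hconj : Continuous (fun q : ℝ × PV => (starRingEnd ℂ) (q.2.1 i)) :=
    Complex.continuous_conj.comp happ
  exact happ.sub ((hτ.mul hdiv).mul hconj)

-- the three continuous maps of the homotopy equivalence
open scoped unitInterval

lemma mem_notRP2_iff (x : PV) : pr x ∈ RP2ᶜ ↔ Projectivization.mk ℂ x.1 x.2 ∉ RP2 := Iff.rfl

def fMap : ↥(RP2ᶜ) → ↥conic := fun p =>
  ⟨Hp 1 zero_le_one le_rfl p.1 p.2, Hp_one_mem_conic p.1 p.2⟩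

def gMap : ↥conic → ↥(RP2ᶜ) := fun p => ⟨p.1, conic_subset_compl p.2⟩

lemma continuous_gMap : Continuous gMap :=
  Continuous.subtype_mk continuous_subtype_val _

def q1 : ↥(pr ⁻¹' RP2ᶜ) → ↥(RP2ᶜ) := (RP2ᶜ).restrictPreimage pr

lemma hq1 : Topology.IsQuotientMap q1 := isQuotientMap_restrict isOpenQuotientMap_pr _

lemma domain_lt (x : ↥(pr ⁻¹' RP2ᶜ)) : Complex.abs (qf x.1.1) < bf x.1.1 :=
  (not_RP2_iff x.1.2).1 x.2

lemma continuous_fMap : Continuous fMap := by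
  rw [hq1.continuous_iff]
  have heq : fMap ∘ q1 = fun x : ↥(pr ⁻¹' RP2ᶜ) =>
      (⟨pr ⟨Fm 1 x.1.1, Fm_ne_zero (domain_lt x) zero_le_one le_rfl⟩,
        by
          rw [show pr ⟨Fm 1 x.1.1, _⟩ = Projectivization.mk ℂ (Fm 1 x.1.1)
            (Fm_ne_zero (domain_lt x) zero_le_one le_rfl) from rfl]
          exact (mem_conic_iff _).2 (qf_Fm_one x.1.2)⟩ : ↥conic) := by
    funext x
    apply Subtype.ext
    exact Hp_mk 1 zero_le_one le_rfl x.1.2 (pr x.1) x.2 rfl _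
  rw [heq]
  apply Continuous.subtype_mk
  apply continuous_pr.comp
  apply Continuous.subtype_mk
  have : Continuous (fun x : ↥(pr ⁻¹' RP2ᶜ) => ((1 : ℝ), x.1)) :=
    continuous_const.prodMk (continuous_subtype_val)
  exact continuous_Fm_aux.comp this

def Ht : I × ↥(RP2ᶜ) → ↥(RP2ᶜ) := fun q =>
  ⟨Hp (1 - (q.1 : ℝ)) (Isub0 q.1) (Isub1 q.1) q.2.1 q.2.2,
    Hp_not_RP2 _ _ _ _ _⟩

lemma continuous_Ht : Continuous Ht := by
  have hq2 : Topology.IsQuotientMap (Prod.map (id : I → I) q1) := by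
    apply ((IsOpenMap.id).prodMap
      (isOpenMap_restrictPreimage isOpenQuotientMap_pr.isOpenMap _)).isQuotientMap
    · exact continuous_id.prodMap hq1.continuous
    · exact Function.Surjective.prodMap Function.surjective_id hq1.surjective
  rw [hq2.continuous_iff]
  have heq : Ht ∘ Prod.map (id : I → I) q1 = fun q : I × ↥(pr ⁻¹' RP2ᶜ) =>
      (⟨pr ⟨Fm (1 - (q.1 : ℝ)) q.2.1.1,
          Fm_ne_zero (domain_lt q.2) (Isub0 q.1) (Isub1 q.1)⟩,
        by
          rw [show pr ⟨Fm (1 - (q.1 : ℝ)) q.2.1.1, _⟩ = Projectivization.mk ℂ _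
            (Fm_ne_zero (domain_lt q.2) (Isub0 q.1) (Isub1 q.1)) from rfl]
          exact (not_RP2_iff _).2
            (abs_qf_Fm_lt (domain_lt q.2) (Isub0 q.1) (Isub1 q.1))⟩ :
        ↥(RP2ᶜ)) := by
    funext q
    apply Subtype.ext
    exact Hp_mk (1 - ((q.1 : unitInterval) : ℝ)) (Isub0 q.1) (Isub1 q.1) q.2.1.2 (pr q.2.1) q.2.2 rfl _
  rw [heq]
  apply Continuous.subtype_mk
  apply continuous_pr.comp
  apply Continuous.subtype_mk
  have hτ : Continuous (fun q : I × ↥(pr ⁻¹' RP2ᶜ) => 1 - (q.1 : ℝ)) :=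
    continuous_const.sub (continuous_subtype_val.comp continuous_fst)
  have hx : Continuous (fun q : I × ↥(pr ⁻¹' RP2ᶜ) => q.2.1) :=
    continuous_subtype_val.comp continuous_snd
  exact continuous_Fm_aux.comp (hτ.prodMk hx)

end
end CP2Aux

theorem complement_RP2_homotopyEquiv_conic :
    Nonempty (ContinuousMap.HomotopyEquiv (↥(RP2ᶜ)) (↥conic)) := by
  classical
  refine ⟨⟨⟨CP2Aux.fMap, CP2Aux.continuous_fMap⟩, ⟨CP2Aux.gMap, CP2Aux.continuous_gMap⟩, ?_, ?_⟩⟩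
  · -- (g ∘ f) homotopic to id
    refine ⟨⟨⟨CP2Aux.Ht, CP2Aux.continuous_Ht⟩, ?_, ?_⟩⟩
    · intro x
      apply Subtype.ext
      show (CP2Aux.Ht (0, x)).1 = (CP2Aux.gMap (CP2Aux.fMap x)).1
      show (CP2Aux.Hp (1 - ((0 : unitInterval) : ℝ)) (CP2Aux.Isub0 0) (CP2Aux.Isub1 0) x.1 x.2) = _
      rw [CP2Aux.Hp_congr (τ' := 1) (by norm_num) _ _ zero_le_one le_rfl x.1 x.2]
      rfl
    · intro x
      apply Subtype.ext
      show (CP2Aux.Ht (1, x)).1 = x.1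
      show (CP2Aux.Hp (1 - ((1 : unitInterval) : ℝ)) (CP2Aux.Isub0 1) (CP2Aux.Isub1 1) x.1 x.2) = x.1
      rw [CP2Aux.Hp_congr (τ' := 0) (by norm_num) _ _ le_rfl zero_le_one x.1 x.2]
      exact CP2Aux.Hp_zero x.1 x.2
  · -- f ∘ g = id
    have hfg : (ContinuousMap.mk CP2Aux.fMap CP2Aux.continuous_fMap).comp
        (ContinuousMap.mk CP2Aux.gMap CP2Aux.continuous_gMap) = ContinuousMap.id _ := by
      ext p
      show (CP2Aux.fMap (CP2Aux.gMap p)).1 = p.1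
      exact CP2Aux.Hp_of_conic 1 zero_le_one le_rfl p.1 (CP2Aux.conic_subset_compl p.2) p.2
    rw [hfg]
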